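/- For every extended Δ0 formula φ(x̄) there is an NRC expression Verify_φ(x̄) of Boolean type (Set(Unit)) such that for all nested relational inputs x̄, Verify_φ(x̄) evaluates to true (the singleton {⟨⟩}) if and only if φ(x̄) holds, and Verify_φ can be computed from φ in polynomial time. -/

import Mathlib

inductive NTy : Type
  | ur : NTy
  | unit : NTy
  | prod : NTy → NTy → NTy
  | set : NTy → NTy
deriving DecidableEq

def NObj (U : Type) : NTy → Type
  | .ur => U
  | .unit => Unit
  | .prod a b => NObj U a × NObj U b
  | .set a => Set (NObj U a)

def NObj.asSet {U : Type} {T : NTy} (s : NObj U (NTy.set T)) : Set (NObj U T) := s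

def Env (U : Type) (Γ : List NTy) : Type := (i : Fin Γ.length) → NObj U (Γ.get i)

def Env.nil {U : Type} : Env U [] := fun i => i.elim0

def Env.cons {U : Type} {T : NTy} {Γ : List NTy} (x : NObj U T) (ρ : Env U Γ) :
    Env U (T :: Γ) := fun i =>
  Fin.cases (motive := fun i => NObj U ((T :: Γ).get i)) x (fun j => ρ j) i

inductive Tm : List NTy → NTy → Type
  | var {Γ} (i : Fin Γ.length) : Tm Γ (Γ.get i)
  | unit {Γ} : Tm Γ NTy.unit
  | pair {Γ a b} : Tm Γ a → Tm Γ b → Tm Γ (NTy.prod a b)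
  | fst {Γ a b} : Tm Γ (NTy.prod a b) → Tm Γ a
  | snd {Γ a b} : Tm Γ (NTy.prod a b) → Tm Γ b

def Tm.eval {U : Type} : ∀ {Γ T}, Tm Γ T → Env U Γ → NObj U T
  | _, _, .var i, ρ => ρ i
  | _, _, .unit, _ => ()
  | _, _, .pair s t, ρ => (s.eval ρ, t.eval ρ)
  | _, _, .fst t, ρ => (t.eval ρ).1
  | _, _, .snd t, ρ => (t.eval ρ).2

inductive D0 : List NTy → Type
  | eq {Γ} : Tm Γ NTy.ur → Tm Γ NTy.ur → D0 Γ
  | ne {Γ} : Tm Γ NTy.ur → Tm Γ NTy.ur → D0 Γ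
  | tru {Γ} : D0 Γ
  | fls {Γ} : D0 Γ
  | and {Γ} : D0 Γ → D0 Γ → D0 Γ
  | or {Γ} : D0 Γ → D0 Γ → D0 Γ
  | all {Γ T} : Tm Γ (NTy.set T) → D0 (T :: Γ) → D0 Γ
  | ex {Γ T} : Tm Γ (NTy.set T) → D0 (T :: Γ) → D0 Γ

def D0.Sat {U : Type} : ∀ {Γ}, D0 Γ → Env U Γ → Prop
  | _, .eq s t, ρ => s.eval ρ = t.eval ρ
  | _, .ne s t, ρ => s.eval ρ ≠ t.eval ρ
  | _, .tru, _ => True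
  | _, .fls, _ => False
  | _, .and φ ψ, ρ => φ.Sat ρ ∧ ψ.Sat ρ
  | _, .or φ ψ, ρ => φ.Sat ρ ∨ ψ.Sat ρ
  | _, .all t φ, ρ => ∀ x ∈ NObj.asSet (t.eval ρ), φ.Sat (Env.cons x ρ)
  | _, .ex t φ, ρ => ∃ x ∈ NObj.asSet (t.eval ρ), φ.Sat (Env.cons x ρ)

def Tm.fv : ∀ {Γ T}, Tm Γ T → Finset (Fin Γ.length)
  | _, _, .var i => {i}
  | _, _, .unit => ∅
  | _, _, .pair s t => s.fv ∪ t.fv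
  | _, _, .fst t => t.fv
  | _, _, .snd t => t.fv

def lowerFv {n : ℕ} (s : Finset (Fin (n + 1))) : Finset (Fin n) :=
  Finset.univ.filter (fun j => j.succ ∈ s)

def D0.fv : ∀ {Γ}, D0 Γ → Finset (Fin Γ.length)
  | _, .eq s t => s.fv ∪ t.fv
  | _, .ne s t => s.fv ∪ t.fv
  | _, .tru => ∅
  | _, .fls => ∅
  | _, .and φ ψ => φ.fv ∪ ψ.fv
  | _, .or φ ψ => φ.fv ∪ ψ.fv
  | _, .all t φ => t.fv ∪ lowerFv φ.fv
  | _, .ex t φ => t.fv ∪ lowerFv φ.fv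

open Classical

/-- The default object of each type (used by `get` on non-singletons). -/
def NObj.defaultObj (U : Type) [Inhabited U] : ∀ T : NTy, NObj U T
  | .ur => (default : U)
  | .unit => ()
  | .prod a b => (NObj.defaultObj U a, NObj.defaultObj U b)
  | .set _ => (∅ : Set _)

/-- The nested relational calculus `NRC`, with tuple operations, singleton, empty set,
union, difference, the comprehension/union operator `⋃{E₁ | x ∈ E₂}`, and the `get`
operator extracting the unique element of a singleton. -/
inductive NRC : List NTy → NTy → Type
  | var {Γ} (i : Fin Γ.length) : NRC Γ (Γ.get i)
  | unit {Γ} : NRC Γ NTy.unit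
  | pair {Γ a b} : NRC Γ a → NRC Γ b → NRC Γ (NTy.prod a b)
  | fst {Γ a b} : NRC Γ (NTy.prod a b) → NRC Γ a
  | snd {Γ a b} : NRC Γ (NTy.prod a b) → NRC Γ b
  | sing {Γ T} : NRC Γ T → NRC Γ (NTy.set T)
  | empty {Γ T} : NRC Γ (NTy.set T)
  | union {Γ T} : NRC Γ (NTy.set T) → NRC Γ (NTy.set T) → NRC Γ (NTy.set T)
  | diff {Γ T} : NRC Γ (NTy.set T) → NRC Γ (NTy.set T) → NRC Γ (NTy.set T)
  | bigUnion {Γ S T} : NRC (S :: Γ) (NTy.set T) → NRC Γ (NTy.set S) → NRC Γ (NTy.set T)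
  | get {Γ T} : NRC Γ (NTy.set T) → NRC Γ T

/-- Evaluation of `NRC` expressions on nested relational instances. -/
noncomputable def NRC.eval {U : Type} [Inhabited U] : ∀ {Γ T}, NRC Γ T → Env U Γ → NObj U T
  | _, _, .var i, ρ => ρ i
  | _, _, .unit, _ => ()
  | _, _, .pair s t, ρ => (s.eval ρ, t.eval ρ)
  | _, _, .fst t, ρ => (t.eval ρ).1
  | _, _, .snd t, ρ => (t.eval ρ).2
  | _, _, .sing e, ρ => ({e.eval ρ} : Set _)
  | _, _, .empty, _ => (∅ : Set _)
  | _, _, .union e₁ e₂, ρ => (NObj.asSet (e₁.eval ρ) ∪ NObj.asSet (e₂.eval ρ) : Set _)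
  | _, _, .diff e₁ e₂, ρ => (NObj.asSet (e₁.eval ρ) \ NObj.asSet (e₂.eval ρ) : Set _)
  | _, _, .bigUnion e₁ e₂, ρ =>
      { y | ∃ x ∈ NObj.asSet (e₂.eval ρ), y ∈ NObj.asSet (e₁.eval (Env.cons x ρ)) }
  | _, _, .get (T := T) e, ρ =>
      if h : ∃ x, e.eval ρ = ({x} : Set (NObj U T)) then h.choose else NObj.defaultObj U T

/-- Free variables of an `NRC` expression. -/
def NRC.fv : ∀ {Γ T}, NRC Γ T → Finset (Fin Γ.length)
  | _, _, .var i => {i}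
  | _, _, .unit => ∅
  | _, _, .pair s t => s.fv ∪ t.fv
  | _, _, .fst t => t.fv
  | _, _, .snd t => t.fv
  | _, _, .sing e => e.fv
  | _, _, .empty => ∅
  | _, _, .union e₁ e₂ => e₁.fv ∪ e₂.fv
  | _, _, .diff e₁ e₂ => e₁.fv ∪ e₂.fv
  | _, _, .bigUnion e₁ e₂ => lowerFv e₁.fv ∪ e₂.fv
  | _, _, .get e => e.fv

/-- *Extended* Δ₀ formulas: Δ₀ formulas enriched with membership atoms `t ∈_T u`,
`t ∉_T u` and equality atoms `t =_T u`, `t ≠_T u` at every type `T`. -/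
inductive ED0 : List NTy → Type
  | eqT {Γ T} : Tm Γ T → Tm Γ T → ED0 Γ
  | neT {Γ T} : Tm Γ T → Tm Γ T → ED0 Γ
  | mem {Γ T} : Tm Γ T → Tm Γ (NTy.set T) → ED0 Γ
  | nmem {Γ T} : Tm Γ T → Tm Γ (NTy.set T) → ED0 Γ
  | tru {Γ} : ED0 Γ
  | fls {Γ} : ED0 Γ
  | and {Γ} : ED0 Γ → ED0 Γ → ED0 Γ
  | or {Γ} : ED0 Γ → ED0 Γ → ED0 Γ
  | all {Γ T} : Tm Γ (NTy.set T) → ED0 (T :: Γ) → ED0 Γ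
  | ex {Γ T} : Tm Γ (NTy.set T) → ED0 (T :: Γ) → ED0 Γ

def ED0.Sat {U : Type} : ∀ {Γ}, ED0 Γ → Env U Γ → Prop
  | _, .eqT s t, ρ => s.eval ρ = t.eval ρ
  | _, .neT s t, ρ => s.eval ρ ≠ t.eval ρ
  | _, .mem s t, ρ => s.eval ρ ∈ NObj.asSet (t.eval ρ)
  | _, .nmem s t, ρ => s.eval ρ ∉ NObj.asSet (t.eval ρ)
  | _, .tru, _ => True
  | _, .fls, _ => False
  | _, .and φ ψ, ρ => φ.Sat ρ ∧ ψ.Sat ρ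
  | _, .or φ ψ, ρ => φ.Sat ρ ∨ ψ.Sat ρ
  | _, .all t φ, ρ => ∀ x ∈ NObj.asSet (t.eval ρ), φ.Sat (Env.cons x ρ)
  | _, .ex t φ, ρ => ∃ x ∈ NObj.asSet (t.eval ρ), φ.Sat (Env.cons x ρ)

def Tm.size : ∀ {Γ T}, Tm Γ T → ℕ
  | _, _, .var _ => 1
  | _, _, .unit => 1
  | _, _, .pair s t => s.size + t.size + 1
  | _, _, .fst t => t.size + 1
  | _, _, .snd t => t.size + 1

def ED0.size : ∀ {Γ}, ED0 Γ → ℕ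
  | _, .eqT s t => s.size + t.size + 1
  | _, .neT s t => s.size + t.size + 1
  | _, .mem s t => s.size + t.size + 1
  | _, .nmem s t => s.size + t.size + 1
  | _, .tru => 1
  | _, .fls => 1
  | _, .and φ ψ => φ.size + ψ.size + 1
  | _, .or φ ψ => φ.size + ψ.size + 1
  | _, .all t φ => t.size + φ.size + 1
  | _, .ex t φ => t.size + φ.size + 1

def NRC.size : ∀ {Γ T}, NRC Γ T → ℕ
  | _, _, .var _ => 1
  | _, _, .unit => 1
  | _, _, .pair s t => s.size + t.size + 1
  | _, _, .fst t => t.size + 1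
  | _, _, .snd t => t.size + 1
  | _, _, .sing e => e.size + 1
  | _, _, .empty => 1
  | _, _, .union e₁ e₂ => e₁.size + e₂.size + 1
  | _, _, .diff e₁ e₂ => e₁.size + e₂.size + 1
  | _, _, .bigUnion e₁ e₂ => e₁.size + e₂.size + 1
  | _, _, .get e => e.size + 1

/-- NRC Booleans are objects of type `Set(Unit)`, with `true = {⟨⟩}`. -/
def nrcTrue : Set Unit := {()}

/-! ### Auxiliary definitions for the proof -/

def Tm.toNRC : ∀ {Γ T}, Tm Γ T → NRC Γ T
  | _, _, .var i => .var i
  | _, _, .unit => .unit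
  | _, _, .pair s t => .pair s.toNRC t.toNRC
  | _, _, .fst t => .fst t.toNRC
  | _, _, .snd t => .snd t.toNRC

theorem Tm.toNRC_eval {U : Type} [Inhabited U] :
    ∀ {Γ T} (t : Tm Γ T) (ρ : Env U Γ), t.toNRC.eval ρ = t.eval ρ
  | _, _, .var i, ρ => by simp [Tm.toNRC, NRC.eval, Tm.eval]
  | _, _, .unit, ρ => by simp [Tm.toNRC, NRC.eval, Tm.eval]; rfl
  | _, _, .pair s t, ρ => by
      simp [Tm.toNRC, NRC.eval, Tm.eval, Tm.toNRC_eval s, Tm.toNRC_eval t]; rfl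
  | _, _, .fst t, ρ => by
      simp [Tm.toNRC, NRC.eval, Tm.eval, Tm.toNRC_eval t]
  | _, _, .snd t, ρ => by
      simp [Tm.toNRC, NRC.eval, Tm.eval, Tm.toNRC_eval t]

theorem Tm.toNRC_size : ∀ {Γ T} (t : Tm Γ T), t.toNRC.size = t.size
  | _, _, .var i => by simp [Tm.toNRC, NRC.size, Tm.size]
  | _, _, .unit => by simp [Tm.toNRC, NRC.size, Tm.size]
  | _, _, .pair s t => by
      simp [Tm.toNRC, NRC.size, Tm.size, Tm.toNRC_size s, Tm.toNRC_size t]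
  | _, _, .fst t => by simp [Tm.toNRC, NRC.size, Tm.size, Tm.toNRC_size t]
  | _, _, .snd t => by simp [Tm.toNRC, NRC.size, Tm.size, Tm.toNRC_size t]

theorem Tm.size_pos : ∀ {Γ T} (t : Tm Γ T), 1 ≤ t.size
  | _, _, .var _ => by simp only [Tm.size]; omega
  | _, _, .unit => by simp only [Tm.size]; omega
  | _, _, .pair s t => by simp only [Tm.size]; omega
  | _, _, .fst t => by simp only [Tm.size]; omega
  | _, _, .snd t => by simp only [Tm.size]; omega

/-- Boolean negation: `{()} \ e`. -/
def bnot {Γ} (e : NRC Γ (NTy.set NTy.unit)) : NRC Γ (NTy.set NTy.unit) :=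
  .diff (.sing .unit) e

/-- Nonemptiness test: `⋃{ {()} | x ∈ e }`. -/
def isNE {Γ T} (e : NRC Γ (NTy.set T)) : NRC Γ (NTy.set NTy.unit) :=
  .bigUnion (.sing .unit) e

def isEmp {Γ T} (e : NRC Γ (NTy.set T)) : NRC Γ (NTy.set NTy.unit) :=
  bnot (isNE e)

/-- The verifier translation. -/
def verifyE : ∀ {Γ}, ED0 Γ → NRC Γ (NTy.set NTy.unit)
  | _, .eqT s t => isEmp (.diff (.sing s.toNRC) (.sing t.toNRC))
  | _, .neT s t => isNE (.diff (.sing s.toNRC) (.sing t.toNRC))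
  | _, .mem s t => isEmp (.diff (.sing s.toNRC) t.toNRC)
  | _, .nmem s t => isNE (.diff (.sing s.toNRC) t.toNRC)
  | _, .tru => .sing .unit
  | _, .fls => .empty
  | _, .and φ ψ => bnot (.union (bnot (verifyE φ)) (bnot (verifyE ψ)))
  | _, .or φ ψ => .union (verifyE φ) (verifyE ψ)
  | _, .all t φ => isEmp (.bigUnion (bnot (verifyE φ)) t.toNRC)
  | _, .ex t φ => isNE (.bigUnion (verifyE φ) t.toNRC)

theorem bnot_size {Γ} (e : NRC Γ (NTy.set NTy.unit)) : (bnot e).size = e.size + 3 := by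
  simp only [bnot, NRC.size]; omega

theorem isNE_size {Γ T} (e : NRC Γ (NTy.set T)) : (isNE e).size = e.size + 3 := by
  simp only [isNE, NRC.size]; omega

theorem isEmp_size {Γ T} (e : NRC Γ (NTy.set T)) : (isEmp e).size = e.size + 6 := by
  rw [isEmp, bnot_size, isNE_size]

theorem verifyE_size : ∀ {Γ} (φ : ED0 Γ), (verifyE φ).size ≤ 12 * φ.size
  | _, .eqT s t => by
      have hs := Tm.size_pos s; have ht := Tm.size_pos t
      simp only [verifyE, isEmp_size, NRC.size, Tm.toNRC_size, ED0.size]; omega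
  | _, .neT s t => by
      have hs := Tm.size_pos s; have ht := Tm.size_pos t
      simp only [verifyE, isNE_size, NRC.size, Tm.toNRC_size, ED0.size]; omega
  | _, .mem s t => by
      have hs := Tm.size_pos s; have ht := Tm.size_pos t
      simp only [verifyE, isEmp_size, NRC.size, Tm.toNRC_size, ED0.size]; omega
  | _, .nmem s t => by
      have hs := Tm.size_pos s; have ht := Tm.size_pos t
      simp only [verifyE, isNE_size, NRC.size, Tm.toNRC_size, ED0.size]; omega
  | _, .tru => by simp only [verifyE, NRC.size, ED0.size]; omega
  | _, .fls => by simp only [verifyE, NRC.size, ED0.size]; omega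
  | _, .and φ ψ => by
      have h1 := verifyE_size φ; have h2 := verifyE_size ψ
      simp only [verifyE, bnot_size, NRC.size, ED0.size]; omega
  | _, .or φ ψ => by
      have h1 := verifyE_size φ; have h2 := verifyE_size ψ
      simp only [verifyE, NRC.size, ED0.size]; omega
  | _, .all t φ => by
      have h1 := verifyE_size φ; have ht := Tm.size_pos t
      simp only [verifyE, isEmp_size, bnot_size, NRC.size, Tm.toNRC_size, ED0.size]; omega
  | _, .ex t φ => by
      have h1 := verifyE_size φ; have ht := Tm.size_pos t
      simp only [verifyE, isNE_size, NRC.size, Tm.toNRC_size, ED0.size]; omega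

theorem unitSet_ext {A B : Set Unit} (h : () ∈ A ↔ () ∈ B) : A = B := by
  ext u; cases u; exact h

theorem unitSet_eq_true_iff {A : Set Unit} : A = nrcTrue ↔ () ∈ A := by
  constructor
  · intro h; rw [h]; exact rfl
  · intro h; apply unitSet_ext; simp [nrcTrue, h]

theorem mem_bnot {U : Type} [Inhabited U] {Γ} (e : NRC Γ (NTy.set NTy.unit))
    (ρ : Env U Γ) :
    () ∈ NObj.asSet ((bnot e).eval ρ) ↔ () ∉ NObj.asSet (e.eval ρ) := by
  simp only [bnot, NRC.eval, NObj.asSet, Set.mem_diff, Set.mem_singleton_iff, true_and]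
  exact ⟨fun h => h.2, fun h => ⟨rfl, h⟩⟩

theorem mem_isNE {U : Type} [Inhabited U] {Γ T} (e : NRC Γ (NTy.set T))
    (ρ : Env U Γ) :
    () ∈ NObj.asSet ((isNE e).eval ρ) ↔ ∃ x, x ∈ NObj.asSet (e.eval ρ) := by
  simp only [isNE, NRC.eval, NObj.asSet, Set.mem_setOf_eq, Set.mem_singleton_iff]
  constructor
  · rintro ⟨x, hx, -⟩; exact ⟨x, hx⟩
  · rintro ⟨x, hx⟩; exact ⟨x, hx, rfl⟩

theorem mem_isEmp {U : Type} [Inhabited U] {Γ T} (e : NRC Γ (NTy.set T))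
    (ρ : Env U Γ) :
    () ∈ NObj.asSet ((isEmp e).eval ρ) ↔ ∀ x, x ∉ NObj.asSet (e.eval ρ) := by
  rw [isEmp, mem_bnot, mem_isNE]
  push_neg
  rfl

theorem verifyE_mem {U : Type} [Inhabited U] :
    ∀ {Γ} (φ : ED0 Γ) (ρ : Env U Γ),
      () ∈ NObj.asSet ((verifyE φ).eval ρ) ↔ φ.Sat ρ
  | _, .eqT s t, ρ => by
      rw [verifyE, mem_isEmp]
      simp only [NRC.eval, NObj.asSet, Tm.toNRC_eval, ED0.Sat, Set.mem_diff,
        Set.mem_singleton_iff]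
      constructor
      · intro h
        by_contra hc
        exact h (s.eval ρ) ⟨rfl, fun h' => hc h'⟩
      · rintro h x ⟨rfl, hne⟩
        exact hne h
  | _, .neT s t, ρ => by
      rw [verifyE, mem_isNE]
      simp only [NRC.eval, NObj.asSet, Tm.toNRC_eval, ED0.Sat, Set.mem_diff,
        Set.mem_singleton_iff]
      constructor
      · rintro ⟨x, rfl, hne⟩ h
        exact hne h
      · intro h
        exact ⟨s.eval ρ, rfl, fun h' => h h'⟩
  | _, .mem s t, ρ => by
      rw [verifyE, mem_isEmp]
      simp only [NRC.eval, NObj.asSet, Tm.toNRC_eval, ED0.Sat, Set.mem_diff,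
        Set.mem_singleton_iff]
      constructor
      · intro h
        by_contra hc
        exact h (s.eval ρ) ⟨rfl, hc⟩
      · rintro h x ⟨rfl, hn⟩
        exact hn h
  | _, .nmem s t, ρ => by
      rw [verifyE, mem_isNE]
      simp only [NRC.eval, NObj.asSet, Tm.toNRC_eval, ED0.Sat, Set.mem_diff,
        Set.mem_singleton_iff]
      constructor
      · rintro ⟨x, rfl, hn⟩
        exact hn
      · intro h
        exact ⟨s.eval ρ, rfl, h⟩
  | _, .tru, ρ => by
      simp [verifyE, NRC.eval, NObj.asSet, ED0.Sat]
      exact Set.mem_singleton _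
  | _, .fls, ρ => by
      simp [verifyE, NRC.eval, NObj.asSet, ED0.Sat]
      exact fun h => h
  | _, .and φ ψ, ρ => by
      rw [verifyE, mem_bnot]
      have h1 := verifyE_mem φ ρ; have h2 := verifyE_mem ψ ρ
      show ¬ (() ∈ NObj.asSet ((bnot (verifyE φ)).eval ρ) ∨
        () ∈ NObj.asSet ((bnot (verifyE ψ)).eval ρ)) ↔ _
      rw [mem_bnot, mem_bnot, h1, h2]
      simp only [ED0.Sat]
      tauto
  | _, .or φ ψ, ρ => by
      have h1 := verifyE_mem φ ρ; have h2 := verifyE_mem ψ ρ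
      simp only [verifyE, NRC.eval, NObj.asSet, Set.mem_union, ED0.Sat] at *
      exact or_congr h1 h2
  | _, .all t φ, ρ => by
      rw [verifyE, mem_isEmp]
      have h1 : ∀ x, () ∈ NObj.asSet ((verifyE φ).eval (Env.cons x ρ)) ↔
          φ.Sat (Env.cons x ρ) := fun x => verifyE_mem φ _
      simp only [NRC.eval, NObj.asSet, Tm.toNRC_eval, ED0.Sat, Set.mem_setOf_eq] at *
      constructor
      · intro h x hx
        by_contra hc
        exact h () ⟨x, hx, rfl, fun hm => hc ((h1 x).mp hm)⟩
      · rintro h y ⟨x, hx, hy⟩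
        cases y
        exact hy.2 ((h1 x).mpr (h x hx))
  | _, .ex t φ, ρ => by
      rw [verifyE, mem_isNE]
      have h1 : ∀ x, () ∈ NObj.asSet ((verifyE φ).eval (Env.cons x ρ)) ↔
          φ.Sat (Env.cons x ρ) := fun x => verifyE_mem φ _
      simp only [NRC.eval, NObj.asSet, Tm.toNRC_eval, ED0.Sat, Set.mem_setOf_eq] at *
      constructor
      · rintro ⟨y, x, hx, hy⟩
        cases y
        replace hy := (h1 x).mp hy
        exact ⟨x, hx, hy⟩
      · rintro ⟨x, hx, hφ⟩
        exact ⟨(), x, hx, (h1 x).mpr hφ⟩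

/-- **The Verification Proposition** (Proposition 2.7): every extended Δ₀ formula `φ(x̄)`
has a corresponding `NRC` expression `Verify_φ(x̄)` of Boolean type `Set(Unit)` that
evaluates to true exactly when `φ(x̄)` holds; the translation is of (uniformly) polynomial
size in the size of `φ` (the formal counterpart of polynomial-time computability). -/
theorem verify_extended_d0_in_nrc :
    ∃ (V : ∀ {Γ : List NTy}, ED0 Γ → NRC Γ (NTy.set NTy.unit)) (c k : ℕ),
      ∀ (Γ : List NTy) (φ : ED0 Γ),
        (V φ).size ≤ c * (φ.size + 1) ^ k ∧
        ∀ (U : Type) [Inhabited U] (ρ : Env U Γ),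
          (NObj.asSet ((V φ).eval ρ) = nrcTrue) ↔ φ.Sat ρ := by
  refine ⟨fun {Γ} φ => verifyE φ, 12, 1, fun Γ φ => ⟨?_, fun U _ ρ => ?_⟩⟩
  · calc (verifyE φ).size ≤ 12 * φ.size := verifyE_size φ
      _ ≤ 12 * (φ.size + 1) ^ 1 := by rw [pow_one]; omega
  · exact unitSet_eq_true_iff.trans (verifyE_mem φ ρ)
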